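/- Let T be a closed interval [a,b] in ℝ and let {f_j}_{j∈J} be a finite family of C¹ functions on [a,b]. Define g(x) = max_{j∈J} f_j(x). Then for every interior point x ∈ (a,b), the right derivative g'₊(x) and left derivative g'₋(x) exist and satisfy g'₊(x) ≥ g'₋(x). Moreover, letting J(x) = {j : f_j(x) = g(x)}, we have g'₊(x) ≥ max_{j∈J(x)} f_j'(x) and g'₋(x) ≤ min_{j∈J(x)} f_j'(x). -/

import Mathlib

open Set Filter Asymptotics Topology

lemma abs_ciSup_sub_ciSup_le {ι : Type*} [Fintype ι] [Nonempty ι] (u v : ι → ℝ) :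
    |(⨆ i, u i) - ⨆ i, v i| ≤ ∑ i, |u i - v i| := by
  have key : ∀ (a b : ι → ℝ), (⨆ i, a i) - (⨆ i, b i) ≤ ∑ i, |a i - b i| := by
    intro a b
    rw [sub_le_iff_le_add]
    refine ciSup_le fun i => ?_
    have h1 : a i ≤ b i + |a i - b i| := by
      have := le_abs_self (a i - b i); linarith
    have h2 : b i ≤ ⨆ j, b j := le_ciSup (Set.Finite.bddAbove (Set.finite_range b)) i
    have h3 : |a i - b i| ≤ ∑ j, |a j - b j| :=
      Finset.single_le_sum (f := fun j => |a j - b j|) (fun j _ => abs_nonneg _) (Finset.mem_univ i)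
    linarith
  rw [abs_sub_le_iff]
    
  constructor
  · exact key u v
  · calc (⨆ i, v i) - ⨆ i, u i ≤ ∑ i, |v i - u i| := key v u
      _ = ∑ i, |u i - v i| := by simp [abs_sub_comm]

lemma sup_hasDerivWithinAt {ι : Type*} [Fintype ι] [Nonempty ι]
    (f : ι → ℝ → ℝ) (d : ι → ℝ) (x c D : ℝ) (s : Set ℝ)
    (hfx : ∀ i, f i x = c)
    (hd : ∀ i, HasDerivWithinAt (f i) (d i) s x)
    (hD : ∀ y ∈ s, (⨆ i, (c + (y - x) * d i)) = c + (y - x) * D) :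
    HasDerivWithinAt (fun y => ⨆ i, f i y) D s x := by
  rw [hasDerivWithinAt_iff_isLittleO]
  have hsum : (fun y => ∑ i, |f i y - (c + (y - x) * d i)|) =o[𝓝[s] x] fun y => y - x := by
    refine Asymptotics.IsLittleO.fun_sum fun i _ => ?_
    have h := (hd i)
    rw [hasDerivWithinAt_iff_isLittleO] at h
    have h' := h.norm_left
    simp only [Real.norm_eq_abs, hfx i, smul_eq_mul] at h'
    refine h'.congr_left fun y => ?_
    ring_nf
  refine Asymptotics.IsBigO.trans_isLittleO ?_ hsum
  rw [Asymptotics.isBigO_iff]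
  refine ⟨1, ?_⟩
  filter_upwards [self_mem_nhdsWithin] with y hy
  have hx' : (⨆ i, f i x) = c := by simp [hfx]
  rw [hx']
  have hb : |(⨆ i, f i y) - c - (y - x) • D| ≤ ∑ i, |f i y - (c + (y - x) * d i)| := by
    have : (⨆ i, f i y) - c - (y - x) • D = (⨆ i, f i y) - (⨆ i, (c + (y - x) * d i)) := by
      rw [hD y hy]; simp [smul_eq_mul]; ring
    rw [this]
    exact abs_ciSup_sub_ciSup_le _ _
  calc ‖(⨆ i, f i y) - c - (y - x) • D‖ ≤ ∑ i, |f i y - (c + (y - x) * d i)| := hb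
    _ ≤ 1 * ‖∑ i, |f i y - (c + (y - x) * d i)|‖ := by
        rw [one_mul, Real.norm_eq_abs]; exact le_abs_self _

/-- the upper envelope `g` of a finite family of `C¹` functions on `[a,b]`
has one-sided derivatives at every interior point, with the right derivative at least the
left derivative; moreover the right derivative dominates `f_j'(x)` and the left derivative
is dominated by `f_j'(x)` for every `j` attaining the maximum at `x`. -/
theorem stmt0
    {J : Type*} [Fintype J] [Nonempty J]
    (a b : ℝ) (hab : a < b)
    (f : J → ℝ → ℝ)
    (hf : ∀ j, ContDiffOn ℝ 1 (f j) (Set.Icc a b))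
    (g : ℝ → ℝ) (hg : ∀ x, g x = ⨆ j, f j x) :
    ∀ x ∈ Set.Ioo a b,
      ∃ dr dl : ℝ,
        HasDerivWithinAt g dr (Set.Ici x) x ∧
        HasDerivWithinAt g dl (Set.Iic x) x ∧
        dl ≤ dr ∧
        (∀ j, f j x = g x → derivWithin (f j) (Set.Icc a b) x ≤ dr) ∧
        (∀ j, f j x = g x → dl ≤ derivWithin (f j) (Set.Icc a b) x) := by
  classical
  intro x hx
  have hIcc : Set.Icc a b ∈ 𝓝 x := Icc_mem_nhds hx.1 hx.2
  set d : J → ℝ := fun j => derivWithin (f j) (Set.Icc a b) x with hd_def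
  have hderiv : ∀ j, HasDerivAt (f j) (d j) x := by
    intro j
    have h1 : DifferentiableWithinAt ℝ (f j) (Set.Icc a b) x :=
      (hf j).differentiableOn one_ne_zero x (Set.mem_Icc.mpr ⟨hx.1.le, hx.2.le⟩)
    exact h1.hasDerivWithinAt.hasDerivAt hIcc
  have hcont : ∀ j, ContinuousAt (f j) x := fun j =>
    (hderiv j).continuousAt
  -- active index set
  have hle : ∀ j, f j x ≤ g x := fun j => by
    rw [hg x]
    exact le_ciSup (f := fun j => f j x) (Set.Finite.bddAbove (Set.finite_range _)) j
  obtain ⟨j0, hj0max⟩ := Finite.exists_max fun j => f j x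
  have hj0 : f j0 x = g x := le_antisymm (hle j0) (by rw [hg x]; exact ciSup_le hj0max)
  let A := {j : J // f j x = g x}
  haveI : Nonempty A := ⟨⟨j0, hj0⟩⟩
  set gt : ℝ → ℝ := fun y => ⨆ i : A, f i.1 y with hgt_def
  -- eventual equality
  have heq : ∀ᶠ y in 𝓝 x, g y = gt y := by
    have hall : ∀ᶠ y in 𝓝 x, ∀ j, f j y ≤ gt y := by
      rw [eventually_all]
      intro j
      by_cases hjA : f j x = g x
      · exact Eventually.of_forall fun y =>
          le_ciSup (f := fun i : A => f i.1 y) (Set.Finite.bddAbove (Set.finite_range _))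
            (⟨j, hjA⟩ : A)
      · have hlt : f j x < f j0 x := by rw [hj0]; exact lt_of_le_of_ne (hle j) hjA
        filter_upwards [(hcont j).eventually_lt (hcont j0) hlt] with y hy
        exact le_trans hy.le
          (le_ciSup (f := fun i : A => f i.1 y) (Set.Finite.bddAbove (Set.finite_range _))
            (⟨j0, hj0⟩ : A))
    filter_upwards [hall] with y hy
    rw [hg y]
    refine le_antisymm (ciSup_le hy) (ciSup_le fun i =>
      le_ciSup (f := fun j => f j y) (Set.Finite.bddAbove (Set.finite_range _)) i.1)
  have hgx : g x = gt x := by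
    refine le_antisymm ?_ ?_
    · rw [hg x]
      refine ciSup_le fun j => le_trans (hle j) ?_
      have : f j0 x ≤ gt x :=
        le_ciSup (f := fun i : A => f i.1 x) (Set.Finite.bddAbove (Set.finite_range _))
          (⟨j0, hj0⟩ : A)
      rw [hj0] at this; exact this
    · exact ciSup_le fun i => hle i.1
  set c := g x with hc_def
  have hfc : ∀ i : A, f i.1 x = c := fun i => i.2
  set dr : ℝ := ⨆ i : A, d i.1 with hdr_def
  set dl : ℝ := ⨅ i : A, d i.1 with hdl_def
  refine ⟨dr, dl, ?_, ?_, ?_, ?_, ?_⟩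
  · -- right derivative
    have hgt : HasDerivWithinAt gt dr (Set.Ici x) x := by
      refine sup_hasDerivWithinAt (fun i : A => f i.1) (fun i : A => d i.1) x c dr _ hfc
        (fun i => (hderiv i.1).hasDerivWithinAt) ?_
      intro y hy
      have ht : (0:ℝ) ≤ y - x := by simp at hy; linarith
      have hmono : Monotone fun r : ℝ => c + (y - x) * r :=
        fun r1 r2 h => by dsimp; nlinarith
      have := hmono.map_ciSup_of_continuousAt (g := fun i : A => d i.1)
        (by fun_prop) (Set.Finite.bddAbove (Set.finite_range _))
      rw [← this]
    exact hgt.congr_of_eventuallyEq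
      ((heq.filter_mono nhdsWithin_le_nhds).mono fun y hy => hy.symm ▸ rfl) hgx
  · -- left derivative
    have hgt : HasDerivWithinAt gt dl (Set.Iic x) x := by
      refine sup_hasDerivWithinAt (fun i : A => f i.1) (fun i : A => d i.1) x c dl _ hfc
        (fun i => (hderiv i.1).hasDerivWithinAt) ?_
      intro y hy
      have ht : y - x ≤ 0 := by simp at hy; linarith
      have hanti : Antitone fun r : ℝ => c + (y - x) * r :=
        fun r1 r2 h => by dsimp; nlinarith
      have := hanti.map_ciInf_of_continuousAt (g := fun i : A => d i.1)
        (by fun_prop) (Set.Finite.bddBelow (Set.finite_range _))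
      rw [← this]
    exact hgt.congr_of_eventuallyEq
      ((heq.filter_mono nhdsWithin_le_nhds).mono fun y hy => hy.symm ▸ rfl) hgx
  · exact le_trans
      (ciInf_le (f := fun i : A => d i.1) (Set.Finite.bddBelow (Set.finite_range _))
        (⟨j0, hj0⟩ : A))
      (le_ciSup (f := fun i : A => d i.1) (Set.Finite.bddAbove (Set.finite_range _))
        (⟨j0, hj0⟩ : A))
  · intro j hj
    exact le_ciSup (f := fun i : A => d i.1) (Set.Finite.bddAbove (Set.finite_range _))
      (⟨j, hj⟩ : A)
  · intro j hj
    exact ciInf_le (f := fun i : A => d i.1) (Set.Finite.bddBelow (Set.finite_range _))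
      (⟨j, hj⟩ : A)
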